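/- Simion's map η_σ from signed permutations of {±1,…,±n} to permutations of {1,…,n+1} is surjective: every permutation of {1,…,n+1} arises as the image of some signed permutation. -/

import Mathlib

/-- `f` is the one-line notation of a signed permutation of `{±1, …, ±n}`:
the absolute values of the entries are distinct and lie in `{1, …, n}`. -/
def IsSignedPerm (n : ℕ) (f : Fin n → ℤ) : Prop :=
  (∀ i, 1 ≤ (f i).natAbs ∧ (f i).natAbs ≤ n) ∧
    Function.Injective fun i => (f i).natAbs

/-- Simion's map: form the sequence `(−πₙ)⋯(−π₁) 0 π₁⋯πₙ`, extract the subsequence of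
nonnegative entries, and add `1` to each entry. -/
def etaSigma (n : ℕ) (f : Fin n → ℤ) : List ℤ :=
  ((((List.ofFn f).map fun x => -x).reverse ++ 0 :: List.ofFn f).filter
    fun x => decide (0 ≤ x)).map fun x => x + 1

/-- Simion's map `η_σ` from signed permutations of `{±1,…,±n}` to permutations of
`{1,…,n+1}` is surjective: every permutation of `{1,…,n+1}` (given by its one-line
notation) arises as the image of some signed permutation. -/
theorem stmt_7 (n : ℕ) (τ : Equiv.Perm (Fin (n + 1))) :
    ∃ f : Fin n → ℤ, IsSignedPerm n f ∧
      etaSigma n f = List.ofFn fun i => ((τ i : ℕ) : ℤ) + 1 := by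
  classical
  set k : ℕ := ((τ.symm 0 : Fin (n+1)) : ℕ) with hkdef
  have hk : k ≤ n := Nat.lt_succ_iff.mp (τ.symm 0).isLt
  set v : ℕ → ℤ := fun m => ((τ ⟨min m n, by omega⟩ : Fin (n+1)) : ℤ) with hvdef
  have hveq : ∀ m (h : m ≤ n), v m = ((τ ⟨m, by omega⟩ : Fin (n+1)) : ℤ) := by
    intro m h
    have : (⟨min m n, by omega⟩ : Fin (n+1)) = ⟨m, by omega⟩ := Fin.ext (min_eq_left h)
    simp [hvdef, this]
  have hvnn : ∀ m, 0 ≤ v m := by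
    intro m; simp [hvdef]
  have hvpos : ∀ m, m ≤ n → m ≠ k → 0 < v m := by
    intro m hm hne
    rw [hveq m hm]
    have h0 : τ ⟨m, by omega⟩ ≠ 0 := by
      intro h
      apply hne
      have : (⟨m, by omega⟩ : Fin (n+1)) = τ.symm 0 := by
        rw [← h]; simp
      have := congrArg Fin.val this
      simpa using this
    have : (τ ⟨m, by omega⟩ : ℕ) ≠ 0 := by
      exact fun h => h0 (Fin.ext (by rw [h, Fin.val_zero]))
    exact_mod_cast Nat.pos_of_ne_zero this
  have hvk : v k = 0 := by
    rw [hveq k hk]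
    have : (⟨k, by omega⟩ : Fin (n+1)) = τ.symm 0 := Fin.ext rfl
    rw [this]
    simp
  have hvle : ∀ m, v m ≤ n := by
    intro m
    have := (τ ⟨min m n, by omega⟩).isLt
    simp only [hvdef]
    exact_mod_cast Nat.lt_succ_iff.mp this
  -- the signed permutation
  set ι : Fin n → ℕ := fun j => if (j : ℕ) < k then k - 1 - j else (j : ℕ) + 1 with hιdef
  set f : Fin n → ℤ := fun j => if (j : ℕ) < k then -(v (k - 1 - j)) else v ((j : ℕ) + 1)
    with hfdef
  have hιle : ∀ j, ι j ≤ n := by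
    intro j; have := j.isLt; simp only [hιdef]; split <;> omega
  have hιne : ∀ j, ι j ≠ k := by
    intro j; have := j.isLt; simp only [hιdef]; split <;> omega
  have habs : ∀ j, ((f j).natAbs : ℤ) = v (ι j) := by
    intro j
    simp only [hfdef, hιdef]
    split
    · rw [Int.natAbs_neg, Int.natAbs_of_nonneg (hvnn _)]
    · rw [Int.natAbs_of_nonneg (hvnn _)]
  refine ⟨f, ⟨?_, ?_⟩, ?_⟩
  · -- bounds
    intro j
    constructor
    · have h1 : 0 < v (ι j) := hvpos _ (hιle j) (hιne j)
      have := habs j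
      omega
    · have h1 : v (ι j) ≤ n := hvle _
      have := habs j
      omega
  · -- injectivity
    intro i j hij
    simp only at hij
    have h1 : v (ι i) = v (ι j) := by rw [← habs i, ← habs j, hij]
    rw [hveq _ (hιle i), hveq _ (hιle j)] at h1
    have h2 : τ ⟨ι i, by have := hιle i; omega⟩ = τ ⟨ι j, by have := hιle j; omega⟩ := by
      apply Fin.ext
      exact_mod_cast h1
    have h3 : ι i = ι j := by
      have := τ.injective h2
      simpa [Fin.ext_iff] using this
    have hi := i.isLt; have hj := j.isLt
    apply Fin.ext
    simp only [hιdef] at h3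
    split at h3 <;> split at h3 <;> omega
  · -- image equality
    set A : List ℤ := List.ofFn (fun i : Fin k => -(v (k - 1 - (i : ℕ)))) with hAdef
    set B : List ℤ := List.ofFn (fun i : Fin (n - k) => v (k + 1 + (i : ℕ))) with hBdef
    have hLA : A.length = k := by simp [hAdef]
    have hLB : B.length = n - k := by simp [hBdef]
    have hLAB : List.ofFn f = A ++ B := by
      apply List.ext_getElem
      · simp [hAdef, hBdef]; omega
      · intro i h1 h2
        simp only [List.getElem_ofFn] at h1 ⊢
        rcases lt_or_ge i k with h | h
        · rw [List.getElem_append_left (by omega)]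
          simp [hAdef, hfdef, h]
        · rw [List.getElem_append_right (by omega)]
          simp only [hBdef, List.getElem_ofFn, hfdef, hLA]
          rw [if_neg (by omega)]
          congr 1
          omega
    have hfilB : B.filter (fun x => decide (0 ≤ x)) = B := by
      rw [List.filter_eq_self]
      intro x hx
      rw [hBdef, List.mem_ofFn] at hx
      obtain ⟨i, rfl⟩ := hx
      simpa using hvnn _
    have hfilA : A.filter (fun x => decide (0 ≤ x)) = [] := by
      rw [List.filter_eq_nil_iff]
      intro x hx
      rw [hAdef, List.mem_ofFn] at hx
      obtain ⟨i, rfl⟩ := hx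
      have hi := i.isLt
      have : 0 < v (k - 1 - (i : ℕ)) := hvpos _ (by omega) (by omega)
      simp only [decide_eq_true_eq]
      omega
    have hfilnB : ((B.map fun x => -x).reverse).filter (fun x => decide (0 ≤ x)) = [] := by
      rw [List.filter_eq_nil_iff]
      intro x hx
      rw [List.mem_reverse, List.mem_map] at hx
      obtain ⟨y, hy, rfl⟩ := hx
      rw [hBdef, List.mem_ofFn] at hy
      obtain ⟨i, rfl⟩ := hy
      have hi := i.isLt
      have : 0 < v (k + 1 + (i : ℕ)) := hvpos _ (by omega) (by omega)
      simp only [decide_eq_true_eq]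
      omega
    have hfilnA : ((A.map fun x => -x).reverse).filter (fun x => decide (0 ≤ x)) =
        (A.map fun x => -x).reverse := by
      rw [List.filter_eq_self]
      intro x hx
      rw [List.mem_reverse, List.mem_map] at hx
      obtain ⟨y, hy, rfl⟩ := hx
      rw [hAdef, List.mem_ofFn] at hy
      obtain ⟨i, rfl⟩ := hy
      have hi := i.isLt
      have : 0 < v (k - 1 - (i : ℕ)) := hvpos _ (by omega) (by omega)
      simp only [decide_eq_true_eq]
      omega
    have hC : (A.map fun x => -x).reverse = List.ofFn (fun i : Fin k => v (i : ℕ)) := by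
      apply List.ext_getElem
      · simp [hAdef]
      · intro i h1 h2
        rw [List.getElem_reverse, List.getElem_map]
        simp only [List.length_map, hLA] at h1 ⊢
        simp only [hAdef, List.getElem_ofFn, List.length_ofFn, neg_neg]
        simp only [List.length_ofFn] at h2
        congr 1
        omega
    have hmain : (A.map fun x => -x).reverse ++ 0 :: B =
        List.ofFn (fun i : Fin (n+1) => ((τ i : Fin (n+1)) : ℤ)) := by
      rw [hC]
      apply List.ext_getElem
      · simp [hBdef]; omega
      · intro i h1 h2
        simp only [List.length_ofFn] at h2
        rcases lt_trichotomy i k with h | h | h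
        · rw [List.getElem_append_left (by simpa using h)]
          rw [List.getElem_ofFn, List.getElem_ofFn]
          rw [hveq i (by omega)]
        · rw [List.getElem_append_right (by simp; omega)]
          rw [List.getElem_cons, dif_pos (by simp; omega), List.getElem_ofFn]
          have e : (⟨i, by omega⟩ : Fin (n+1)) = τ.symm 0 := Fin.ext h
          rw [e, Equiv.apply_symm_apply]
          simp
        · rw [List.getElem_append_right (by simp; omega)]
          simp only [List.length_ofFn]
          rw [List.getElem_cons, dif_neg (by omega)]
          simp only [hBdef, List.getElem_ofFn]
          rw [hveq _ (by omega)]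
          have e : (⟨k + 1 + (i - k - 1), by omega⟩ : Fin (n+1)) = ⟨i, by omega⟩ := by
            apply Fin.ext
            simp only [Fin.val_mk]
            omega
          rw [e]
    rw [etaSigma, hLAB]
    simp only [List.map_append, List.reverse_append, List.filter_append, List.filter_cons]
    rw [if_pos (by norm_num), hfilnA, hfilnB, hfilA, hfilB]
    rw [List.map_nil, List.nil_append, ← List.map_append, List.nil_append, hmain,
      List.map_ofFn]
    rfl
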